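/- arXiv:2203.13233 — 2 statements merged into one kernel-verified Lean document; each statement's English description precedes it below -/
import Mathlib

section
/- Let G be a sparsifiable finite simple graph and let H be a finite simple graph of minimum degree at least 3. If G contains H as a minor, then G contains H as an induced minor. -/
namespace Paper

open SimpleGraph

/-- `(T, β)` is a tree decomposition of `G`. -/
def IsTreeDecomp {V ι : Type} (G : SimpleGraph V) (T : SimpleGraph ι) (β : ι → Set V) : Prop :=
  T.Connected ∧ T.IsAcyclic ∧
  (∀ v : V, ∃ i, v ∈ β i) ∧
  (∀ u v : V, G.Adj u v → ∃ i, u ∈ β i ∧ v ∈ β i) ∧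
  (∀ v : V, (SimpleGraph.induce {i | v ∈ β i} T).Connected)

/-- The treewidth of `G`: the least `w` admitting a tree decomposition
with all bags of size at most `w + 1`. -/
noncomputable def treewidth {V : Type} (G : SimpleGraph V) : ℕ :=
  sInf {w | ∃ (ι : Type) (T : SimpleGraph ι) (β : ι → Set V),
    IsTreeDecomp G T β ∧ ∀ i, (β i).ncard ≤ w + 1}

/-- `X` is a minor model of `H` in `G`. -/
def IsMinorModel {V W : Type} (G : SimpleGraph V) (H : SimpleGraph W) (X : W → Set V) : Prop :=
  Pairwise (fun u v => Disjoint (X u) (X v)) ∧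
  (∀ w : W, (SimpleGraph.induce (X w) G).Connected) ∧
  (∀ u v : W, H.Adj u v → ∃ a ∈ X u, ∃ b ∈ X v, G.Adj a b)

/-- `X` is an induced minor model of `H` in `G`. -/
def IsInducedMinorModel {V W : Type} (G : SimpleGraph V) (H : SimpleGraph W)
    (X : W → Set V) : Prop :=
  IsMinorModel G H X ∧
  ∀ u v : W, u ≠ v → ¬ H.Adj u v → ∀ a ∈ X u, ∀ b ∈ X v, ¬ G.Adj a b

def ContainsMinor {V W : Type} (G : SimpleGraph V) (H : SimpleGraph W) : Prop :=
  ∃ X : W → Set V, IsMinorModel G H X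

def ContainsInducedMinor {V W : Type} (G : SimpleGraph V) (H : SimpleGraph W) : Prop :=
  ∃ X : W → Set V, IsInducedMinorModel G H X

/-- The `k × k` grid graph. -/
def grid (k : ℕ) : SimpleGraph (Fin k × Fin k) where
  Adj u v := Nat.dist u.1.val v.1.val + Nat.dist u.2.val v.2.val = 1
  symm := ⟨by intro u v h; simpa [Nat.dist_comm] using h⟩
  loopless := ⟨by intro u h; simp [Nat.dist_self] at h⟩

/-- A vertex `v` is sparsifiable in `G`. -/
def SparsifiableVertex {V : Type} (G : SimpleGraph V) (v : V) : Prop :=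
  (G.neighborSet v).ncard ≤ 2 ∨
  ((G.neighborSet v).ncard = 3 ∧ ∀ u ∈ G.neighborSet v, (G.neighborSet u).ncard ≤ 2) ∨
  (∃ u w₁ w₂ : V, u ≠ w₁ ∧ u ≠ w₂ ∧ w₁ ≠ w₂ ∧ G.neighborSet v = {u, w₁, w₂} ∧
    (G.neighborSet u).ncard ≤ 2 ∧ G.Adj w₁ w₂)

/-- A graph is sparsifiable if all of its vertices are. -/
def Sparsifiable {V : Type} (G : SimpleGraph V) : Prop := ∀ v : V, SparsifiableVertex G v

/-- `I` is a distance-5 independent set in `G`. -/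
def Dist5Indep {V : Type} (G : SimpleGraph V) (I : Set V) : Prop :=
  ∀ u ∈ I, ∀ v ∈ I, u ≠ v → ∀ p : G.Walk u v, 5 ≤ p.length


lemma three_le_ncard_aux {V : Type} {s : Set V} (hs : s.Finite) {a b c : V}
    (ha : a ∈ s) (hb : b ∈ s) (hc : c ∈ s)
    (hab : a ≠ b) (hac : a ≠ c) (hbc : b ≠ c) : 3 ≤ s.ncard := by
  have hsub : ({a, b, c} : Set V) ⊆ s := by
    intro x hx
    simp only [Set.mem_insert_iff, Set.mem_singleton_iff] at hx
    rcases hx with rfl | rfl | rfl <;> assumption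
  have h3 : ({a, b, c} : Set V).ncard = 3 := by
    rw [Set.ncard_insert_of_notMem (by simp [hab, hac]) (Set.toFinite _),
        Set.ncard_pair hbc]
  exact h3 ▸ Set.ncard_le_ncard hsub hs

lemma four_le_ncard_aux {V : Type} {s : Set V} (hs : s.Finite) {a b c d : V}
    (ha : a ∈ s) (hb : b ∈ s) (hc : c ∈ s) (hd : d ∈ s)
    (hab : a ≠ b) (hac : a ≠ c) (had : a ≠ d) (hbc : b ≠ c) (hbd : b ≠ d) (hcd : c ≠ d) :
    4 ≤ s.ncard := by
  have hsub : ({a, b, c, d} : Set V) ⊆ s := by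
    intro x hx
    simp only [Set.mem_insert_iff, Set.mem_singleton_iff] at hx
    rcases hx with rfl | rfl | rfl | rfl <;> assumption
  have h4 : ({a, b, c, d} : Set V).ncard = 4 := by
    rw [Set.ncard_insert_of_notMem (by simp [hab, hac, had]) (Set.toFinite _),
        Set.ncard_insert_of_notMem (by simp [hbc, hbd]) (Set.toFinite _),
        Set.ncard_pair hcd]
  exact h4 ▸ Set.ncard_le_ncard hsub hs

lemma exists_three_distinct {W : Type} {s : Set W} (hs : s.Finite) (h : 3 ≤ s.ncard) :
    ∃ a b c, a ∈ s ∧ b ∈ s ∧ c ∈ s ∧ a ≠ b ∧ a ≠ c ∧ b ≠ c := by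
  obtain ⟨a, ha⟩ := Set.nonempty_of_ncard_ne_zero (show s.ncard ≠ 0 by omega)
  have h2 : 2 ≤ (s \ {a}).ncard := by
    have := Set.ncard_diff_singleton_add_one ha hs
    omega
  obtain ⟨b, hb⟩ := Set.nonempty_of_ncard_ne_zero (show (s \ {a}).ncard ≠ 0 by omega)
  have h1 : 1 ≤ ((s \ {a}) \ {b}).ncard := by
    have := Set.ncard_diff_singleton_add_one hb hs.diff
    omega
  obtain ⟨c, hc⟩ := Set.nonempty_of_ncard_ne_zero (show ((s \ {a}) \ {b}).ncard ≠ 0 by omega)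
  refine ⟨a, b, c, ha, hb.1, hc.1.1, ?_, ?_, ?_⟩
  · exact fun e => hb.2 (e ▸ rfl)
  · exact fun e => hc.1.2 (e ▸ rfl)
  · exact fun e => hc.2 (e ▸ rfl)

lemma connected_insert {V : Type} (G : SimpleGraph V) {S : Set V} {s a : V}
    (hconn : (G.induce S).Connected) (hs : s ∈ S) (hadj : G.Adj a s) :
    (G.induce (insert a S)).Connected := by
  have hset : insert a S = S ∪ {s, a} := by
    ext z
    simp only [Set.mem_insert_iff, Set.mem_union, Set.mem_singleton_iff]
    constructor
    · rintro (rfl | hz)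
      · exact Or.inr (Or.inr rfl)
      · exact Or.inl hz
    · rintro (hz | rfl | rfl)
      · exact Or.inr hz
      · exact Or.inr hs
      · exact Or.inl rfl
  rw [hset]
  exact induce_union_connected hconn.preconnected (induce_pair_connected_of_adj hadj.symm).preconnected
    ⟨s, hs, Or.inl rfl⟩

lemma connected_diff_pendant {V : Type} (G : SimpleGraph V) {S : Set V} {x t : V}
    (hconn : (G.induce S).Connected) (htS : t ∈ S)
    (hadj : G.Adj x t)
    (huniq : ∀ y ∈ S, G.Adj x y → y = t) :
    (G.induce (S \ {x})).Connected := by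
  have htx : t ≠ x := fun h => G.loopless.irrefl x (h ▸ hadj)
  have htm : t ∈ S \ {x} := ⟨htS, htx⟩
  rw [connected_iff]
  refine ⟨?_, ⟨⟨t, htm⟩⟩⟩
  have key : ∀ n : ℕ, ∀ (a b : ↥S) (p : (G.induce S).Walk a b),
      p.length ≤ n → ∀ (ha : a.1 ∈ S \ {x}) (hb : b.1 ∈ S \ {x}),
      (G.induce (S \ {x})).Reachable ⟨a.1, ha⟩ ⟨b.1, hb⟩ := by
    intro n
    induction n with
    | zero =>
      intro a b p hlen ha hb
      cases p with
      | nil => exact Reachable.refl _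
      | cons h q => simp at hlen
    | succ n ih =>
      intro a b p hlen ha hb
      cases p with
      | nil => exact Reachable.refl _
      | @cons _ m _ h q =>
        have hlq : q.length ≤ n := by simp [SimpleGraph.Walk.length_cons] at hlen; omega
        by_cases hm : m.1 = x
        · -- a is a neighbor of x, so a = t
          have hGadj : G.Adj a.1 m.1 := by simpa using h
          have hat : a.1 = t := huniq a.1 a.2 (by rw [hm] at hGadj; exact hGadj.symm)
          cases q with
          | nil =>
            exfalso; exact hb.2 (by simpa using hm)
          | @cons _ m2 _ h2 q2 =>
            have hGadj2 : G.Adj m.1 m2.1 := by simpa using h2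
            have hm2t : m2.1 = t := huniq m2.1 m2.2 (by rw [hm] at hGadj2; exact hGadj2)
            have hm2 : m2.1 ∈ S \ {x} := ⟨m2.2, by rw [hm2t]; exact htx⟩
            have heq : (⟨a.1, ha⟩ : ↥(S \ {x})) = ⟨m2.1, hm2⟩ := by
              apply Subtype.ext; simp only []; rw [hat, hm2t]
            rw [heq]
            exact ih m2 b q2 (by simp [SimpleGraph.Walk.length_cons] at hlen hlq ⊢; omega) hm2 hb
        · have hGadj : G.Adj a.1 m.1 := by simpa using h
          have hm' : m.1 ∈ S \ {x} := ⟨m.2, hm⟩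
          have hadj' : (G.induce (S \ {x})).Adj ⟨a.1, ha⟩ ⟨m.1, hm'⟩ := by simpa using hGadj
          exact hadj'.reachable.trans (ih m b q hlq hm' hb)
  intro y z
  obtain ⟨p⟩ := hconn.preconnected ⟨y.1, y.2.1⟩ ⟨z.1, z.2.1⟩
  have := key p.length _ _ p le_rfl y.2 z.2
  simpa using this

def wastedSet {V W : Type} (G : SimpleGraph V) (H : SimpleGraph W) (X : W → Set V) :
    Set (V × V) :=
  {e | ∃ u v : W, u ≠ v ∧ ¬ H.Adj u v ∧ e.1 ∈ X u ∧ e.2 ∈ X v ∧ G.Adj e.1 e.2}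

noncomputable def mval {V W : Type} [Fintype V] [Fintype W] (G : SimpleGraph V)
    (H : SimpleGraph W) (X : W → Set V) : ℕ :=
  (∑ w : W, (X w).ncard) * (Fintype.card V * Fintype.card V + 1) + (wastedSet G H X).ncard

lemma wasted_lt {V W : Type} [Fintype V] [Fintype W] (G : SimpleGraph V) (H : SimpleGraph W)
    (X : W → Set V) :
    (wastedSet G H X).ncard < Fintype.card V * Fintype.card V + 1 := by
  have h1 : (wastedSet G H X).ncard ≤ (Set.univ : Set (V × V)).ncard :=
    Set.ncard_le_ncard (Set.subset_univ _) Set.finite_univ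
  rw [Set.ncard_univ] at h1
  have h2 : Nat.card (V × V) = Fintype.card V * Fintype.card V := by
    rw [Nat.card_eq_fintype_card, Fintype.card_prod]
  omega

lemma sum_one_aux {W : Type} [Fintype W] {f g : W → ℕ} {u : W}
    (h : ∀ p, p ≠ u → f p = g p) : (∑ p, f p) + g u = (∑ p, g p) + f u := by
  classical
  rw [← Finset.sum_erase_add Finset.univ f (Finset.mem_univ u),
      ← Finset.sum_erase_add Finset.univ g (Finset.mem_univ u)]
  have he : ∑ p ∈ Finset.univ.erase u, f p = ∑ p ∈ Finset.univ.erase u, g p :=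
    Finset.sum_congr rfl (fun p hp => h p (Finset.mem_erase.mp hp).1)
  omega

lemma sum_two_aux {W : Type} [Fintype W] {f g : W → ℕ} {u w : W} (huw : u ≠ w)
    (h2 : f u + f w = g u + g w) (h : ∀ p, p ≠ u → p ≠ w → f p = g p) :
    (∑ p, f p) = ∑ p, g p := by
  classical
  have hw : w ∈ Finset.univ.erase u := Finset.mem_erase.mpr ⟨huw.symm, Finset.mem_univ w⟩
  rw [← Finset.sum_erase_add Finset.univ f (Finset.mem_univ u),
      ← Finset.sum_erase_add _ f hw,
      ← Finset.sum_erase_add Finset.univ g (Finset.mem_univ u),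
      ← Finset.sum_erase_add _ g hw]
  have he : ∑ p ∈ (Finset.univ.erase u).erase w, f p
      = ∑ p ∈ (Finset.univ.erase u).erase w, g p :=
    Finset.sum_congr rfl (fun p hp => h p (Finset.mem_erase.mp (Finset.mem_erase.mp hp).2).1
      (Finset.mem_erase.mp hp).1)
  omega

lemma branch_eq {V W : Type} {X : W → Set V}
    (hd : Pairwise fun u v => Disjoint (X u) (X v)) {p q : W} {z : V}
    (hp : z ∈ X p) (hq : z ∈ X q) : p = q := by
  by_contra h
  exact Set.disjoint_left.mp (hd h) hp hq

lemma deg_le_three {V : Type} {G : SimpleGraph V} (hG : Sparsifiable G) (v : V) :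
    (G.neighborSet v).ncard ≤ 3 := by
  rcases hG v with h | ⟨h, _⟩ | ⟨u, w₁, w₂, _, _, _, hN, _, _⟩
  · omega
  · omega
  · rw [hN]
    have i1 := Set.ncard_insert_le u ({w₁, w₂} : Set V)
    have i2 := Set.ncard_insert_le w₁ ({w₂} : Set V)
    have i3 : ({w₂} : Set V).ncard = 1 := Set.ncard_singleton w₂
    omega


lemma key_lemma {V W : Type} [Fintype V] [Fintype W] {G : SimpleGraph V} {H : SimpleGraph W}
    (hG : Sparsifiable G) (hH : ∀ w : W, 3 ≤ (H.neighborSet w).ncard)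
    {X : W → Set V} (hX : IsMinorModel G H X)
    (hmin : ∀ Y, IsMinorModel G H Y → mval G H X ≤ mval G H Y)
    {p q : W} {x y : V} (hpq : p ≠ q) (hnadj : ¬ H.Adj p q)
    (hx : x ∈ X p) (hy : y ∈ X q) (hxy : G.Adj x y) :
    3 ≤ (G.neighborSet x).ncard ∧ ∃ t ∈ X p, G.Adj x t ∧
      ((∃ t' ∈ X p, G.Adj x t' ∧ t' ≠ t) ∨ (∃ w c, H.Adj p w ∧ c ∈ X w ∧ G.Adj x c)) := by
  classical
  obtain ⟨hdisj, hconn, hedge⟩ := hX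
  by_cases h1 : ∃ t ∈ X p, G.Adj x t
  · obtain ⟨t, htX, hxt⟩ := h1
    have hty : t ≠ y := fun e => hpq (branch_eq hdisj htX (e ▸ hy))
    by_cases h2 : ∃ t' ∈ X p, G.Adj x t' ∧ t' ≠ t
    · refine ⟨?_, t, htX, hxt, Or.inl h2⟩
      obtain ⟨t', ht'X, hxt', htt'⟩ := h2
      have ht'y : t' ≠ y := fun e => hpq (branch_eq hdisj ht'X (e ▸ hy))
      exact three_le_ncard_aux (Set.toFinite _)
        ((G.mem_neighborSet x t).mpr hxt) ((G.mem_neighborSet x t').mpr hxt')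
        ((G.mem_neighborSet x y).mpr hxy) (Ne.symm htt') hty ht'y
    · by_cases h3 : ∃ w, H.Adj p w ∧ ∀ y' ∈ X p, ∀ z ∈ X w, G.Adj y' z → y' = x
      · obtain ⟨w, hpw, hall⟩ := h3
        obtain ⟨a', ha', c, hc, hac⟩ := hedge p w hpw
        have hax : a' = x := hall a' ha' c hc hac
        subst hax
        have hwp : w ≠ p := fun e => H.irrefl (e ▸ hpw)
        have hwq : w ≠ q := fun e => hnadj (e ▸ hpw)
        have htc : t ≠ c := fun e => hwp (branch_eq hdisj hc (show c ∈ X p by rw [← e]; exact htX))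
        have hcy : c ≠ y := fun e => hwq (branch_eq hdisj hc (show c ∈ X q by rw [e]; exact hy))
        refine ⟨?_, t, htX, hxt, Or.inr ⟨w, c, hpw, hc, hac⟩⟩
        exact three_le_ncard_aux (Set.toFinite _)
          ((G.mem_neighborSet _ t).mpr hxt) ((G.mem_neighborSet _ c).mpr hac)
          ((G.mem_neighborSet _ y).mpr hxy) htc hty hcy
      · exfalso
        push_neg at h2 h3
        set Y : W → Set V := fun r => if r = p then X p \ {x} else X r with hYdef
        have hYsub : ∀ r, Y r ⊆ X r := by
          intro r
          by_cases hr : r = p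
          · subst hr; simp only [hYdef, if_pos rfl]; exact Set.diff_subset
          · simp only [hYdef, if_neg hr]; exact subset_rfl
        have hYmodel : IsMinorModel G H Y := by
          refine ⟨fun r s hrs => (hdisj hrs).mono (hYsub r) (hYsub s), ?_, ?_⟩
          · intro r
            by_cases hr : r = p
            · have hYr : Y r = X p \ {x} := by simp [hYdef, hr]
              rw [hYr]
              exact connected_diff_pendant G (hconn p) htX hxt
                (fun y' hy' hadj' => h2 y' hy' hadj')
            · have hYr : Y r = X r := by simp [hYdef, hr]
              rw [hYr]
              exact hconn r
          · intro r s hrs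
            have hrsne : r ≠ s := hrs.ne
            by_cases hr : r = p
            · obtain ⟨y', hy', z, hz, hadjyz, hyx⟩ := h3 s (by rw [← hr]; exact hrs)
              have hsp : s ≠ p := fun e => hrsne (hr.trans e.symm)
              refine ⟨y', ?_, z, ?_, hadjyz⟩
              · have : Y r = X p \ {x} := by simp [hYdef, hr]
                rw [this]; exact ⟨hy', hyx⟩
              · have : Y s = X s := by simp [hYdef, hsp]
                rw [this]; exact hz
            · by_cases hs : s = p
              · obtain ⟨y', hy', z, hz, hadjyz, hyx⟩ := h3 r (by rw [← hs]; exact hrs.symm)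
                refine ⟨z, ?_, y', ?_, hadjyz.symm⟩
                · have : Y r = X r := by simp [hYdef, hr]
                  rw [this]; exact hz
                · have : Y s = X p \ {x} := by simp [hYdef, hs]
                  rw [this]; exact ⟨hy', hyx⟩
              · obtain ⟨a', ha', b', hb', hab'⟩ := hedge r s hrs
                refine ⟨a', ?_, b', ?_, hab'⟩
                · have : Y r = X r := by simp [hYdef, hr]
                  rw [this]; exact ha'
                · have : Y s = X s := by simp [hYdef, hs]
                  rw [this]; exact hb'
        have hmle := hmin Y hYmodel
        have hsum : (∑ r, (Y r).ncard) + (X p).ncard = (∑ r, (X r).ncard) + (Y p).ncard :=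
          sum_one_aux (f := fun r => (Y r).ncard) (g := fun r => (X r).ncard) (u := p)
            (fun r hr => by simp [hYdef, hr])
        have hYp : (Y p).ncard + 1 = (X p).ncard := by
          have : Y p = X p \ {x} := by simp [hYdef]
          rw [this]
          exact Set.ncard_diff_singleton_add_one hx (Set.toFinite _)
        have hwY := wasted_lt G H Y
        have hwX := wasted_lt G H X
        unfold mval at hmle
        set C := Fintype.card V * Fintype.card V + 1 with hC
        set sY := ∑ r, (Y r).ncard with hsY
        set sX := ∑ r, (X r).ncard with hsX
        have hs : sY + 1 = sX := by omega
        have hmul : sX * C = sY * C + C := by rw [← hs]; ring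
        omega
  · exfalso
    have hXp : ∀ z ∈ X p, z = x := by
      intro z hz
      obtain ⟨pw⟩ := (hconn p).preconnected ⟨x, hx⟩ ⟨z, hz⟩
      cases pw with
      | nil => rfl
      | @cons _ m _ h pq2 =>
        exact absurd ⟨m.1, m.2, by simpa using h⟩ h1
    obtain ⟨w₁, w₂, w₃, hw1, hw2, hw3, h12, h13, h23⟩ :=
      exists_three_distinct (Set.toFinite _) (hH p)
    rw [H.mem_neighborSet] at hw1 hw2 hw3
    obtain ⟨a₁, ha₁, b₁, hb₁, hab₁⟩ := hedge p w₁ hw1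
    obtain ⟨a₂, ha₂, b₂, hb₂, hab₂⟩ := hedge p w₂ hw2
    obtain ⟨a₃, ha₃, b₃, hb₃, hab₃⟩ := hedge p w₃ hw3
    rw [hXp a₁ ha₁] at hab₁
    rw [hXp a₂ ha₂] at hab₂
    rw [hXp a₃ ha₃] at hab₃
    have d12 : b₁ ≠ b₂ := fun e => h12 (branch_eq hdisj hb₁ (e ▸ hb₂))
    have d13 : b₁ ≠ b₃ := fun e => h13 (branch_eq hdisj hb₁ (e ▸ hb₃))
    have d23 : b₂ ≠ b₃ := fun e => h23 (branch_eq hdisj hb₂ (e ▸ hb₃))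
    have d1y : b₁ ≠ y := fun e => hnadj (((branch_eq hdisj hb₁ (e ▸ hy))) ▸ hw1)
    have d2y : b₂ ≠ y := fun e => hnadj (((branch_eq hdisj hb₂ (e ▸ hy))) ▸ hw2)
    have d3y : b₃ ≠ y := fun e => hnadj (((branch_eq hdisj hb₃ (e ▸ hy))) ▸ hw3)
    have h4 := four_le_ncard_aux (Set.toFinite (G.neighborSet x))
      ((G.mem_neighborSet x b₁).mpr hab₁) ((G.mem_neighborSet x b₂).mpr hab₂)
      ((G.mem_neighborSet x b₃).mpr hab₃) ((G.mem_neighborSet x y).mpr hxy)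
      d12 d13 d1y d23 d2y d3y
    have := deg_le_three hG x
    omega


lemma surgery {V W : Type} [Fintype V] [Fintype W] {G : SimpleGraph V} {H : SimpleGraph W}
    {X : W → Set V} (hX : IsMinorModel G H X)
    {u v w : W} {a b c u₀ : V}
    (huv : u ≠ v) (hnadj : ¬ H.Adj u v)
    (huw : H.Adj u w) (hvw : H.Adj v w)
    (ha : a ∈ X u) (hb : b ∈ X v) (hc : c ∈ X w)
    (hNa : G.neighborSet a = {u₀, b, c}) (hu₀ : u₀ ∈ X u)
    (hab : G.Adj a b) :
    ∃ Y, IsMinorModel G H Y ∧ mval G H Y < mval G H X := by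
  classical
  obtain ⟨hdisj, hconn, hedge⟩ := hX
  have hwu' : w ≠ u := fun e => False.elim (by rw [e] at huw; exact H.irrefl huw)
  have hwv : w ≠ v := fun e => False.elim (by rw [e] at hvw; exact H.irrefl hvw)
  have hau₀ : G.Adj a u₀ := (G.mem_neighborSet a u₀).mp (by rw [hNa]; exact Or.inl rfl)
  have hac : G.Adj a c := (G.mem_neighborSet a c).mp
    (by rw [hNa]; exact Or.inr (Or.inr rfl))
  have hNa' : ∀ z, G.Adj a z → z = u₀ ∨ z = b ∨ z = c := by
    intro z hz
    have hm := (G.mem_neighborSet a z).mpr hz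
    rw [hNa] at hm
    simpa using hm
  have hu₀a : u₀ ≠ a := hau₀.ne'
  have hba : b ≠ a := hab.ne'
  have hca : c ≠ a := hac.ne'
  have haXw : a ∉ X w := fun h => hwu' (branch_eq hdisj h ha)
  set Y : W → Set V := fun r => if r = u then X u \ {a}
    else if r = w then insert a (X w) else X r with hYdef
  have hYu : Y u = X u \ {a} := by simp [hYdef]
  have hYw : Y w = insert a (X w) := by simp [hYdef, hwu']
  have hYo : ∀ r, r ≠ u → r ≠ w → Y r = X r := fun r h1 h2 => by simp [hYdef, h1, h2]
  have hYmem : ∀ r z, z ∈ Y r → (z ∈ X r ∧ z ≠ a) ∨ (r = w ∧ z = a) := by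
    intro r z hz
    by_cases hr : r = u
    · rw [hr, hYu] at hz
      exact Or.inl ⟨by rw [hr]; exact hz.1, hz.2⟩
    · by_cases hr2 : r = w
      · rw [hr2, hYw] at hz
        rcases hz with rfl | hz
        · exact Or.inr ⟨hr2, rfl⟩
        · exact Or.inl ⟨by rw [hr2]; exact hz, fun e => haXw (e ▸ hz)⟩
      · rw [hYo r hr hr2] at hz
        refine Or.inl ⟨hz, fun e => hr (branch_eq hdisj (e ▸ hz) ha)⟩
  have hXmem : ∀ r z, z ∈ X r → z ≠ a → z ∈ Y r := by
    intro r z hz hza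
    by_cases hr : r = u
    · rw [hr, hYu]; exact ⟨by rw [← hr]; exact hz, hza⟩
    · by_cases hr2 : r = w
      · rw [hr2, hYw]; exact Set.mem_insert_of_mem _ (by rw [← hr2]; exact hz)
      · rw [hYo r hr hr2]; exact hz
  have haYw : a ∈ Y w := by rw [hYw]; exact Set.mem_insert _ _
  have hu₀Yu : u₀ ∈ Y u := by rw [hYu]; exact ⟨hu₀, hu₀a⟩
  have hYmodel : IsMinorModel G H Y := by
    refine ⟨?_, ?_, ?_⟩
    · intro r s hrs
      rw [Set.disjoint_left]
      intro z hzr hzs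
      rcases hYmem r z hzr with ⟨h1, h2⟩ | ⟨hrw, hza⟩
      · rcases hYmem s z hzs with ⟨h1', h2'⟩ | ⟨hsw, hza'⟩
        · exact hrs (branch_eq hdisj h1 h1')
        · exact h2 hza'
      · rcases hYmem s z hzs with ⟨h1', h2'⟩ | ⟨hsw, hza'⟩
        · exact h2' hza
        · exact hrs (hrw.trans hsw.symm)
    · intro r
      by_cases hr : r = u
      · rw [hr, hYu]
        refine connected_diff_pendant G (hconn u) hu₀ hau₀ ?_
        intro z hz hadjz
        rcases hNa' z hadjz with rfl | rfl | rfl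
        · rfl
        · exact absurd (branch_eq hdisj hz hb) huv
        · exact absurd (branch_eq hdisj hz hc) (fun e => hwu' e.symm)
      · by_cases hr2 : r = w
        · rw [hr2, hYw]
          exact connected_insert G (hconn w) hc hac
        · rw [hYo r hr hr2]
          exact hconn r
    · intro r s hrs
      obtain ⟨y, hyX, z, hzX, hyz⟩ := hedge r s hrs
      by_cases hya : y = a
      · have hru : r = u := branch_eq hdisj (hya ▸ hyX) ha
        by_cases hza : z = a
        · exact absurd (hya ▸ hza ▸ hyz) (G.irrefl)
        · rcases hNa' z (hya ▸ hyz) with rfl | rfl | rfl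
          · exact absurd ((branch_eq hdisj hzX hu₀).trans hru.symm) hrs.ne'
          · exact absurd (by rw [hru, branch_eq hdisj hzX hb] at hrs; exact hrs) hnadj
          · have hsw : s = w := branch_eq hdisj hzX hc
            exact ⟨u₀, by rw [hru]; exact hu₀Yu, a, by rw [hsw]; exact haYw, hau₀.symm⟩
      · by_cases hza : z = a
        · have hsu : s = u := branch_eq hdisj (hza ▸ hzX) ha
          rcases hNa' y ((hza ▸ hyz).symm) with rfl | rfl | rfl
          · exact absurd ((branch_eq hdisj hyX hu₀).trans hsu.symm) hrs.ne
          · exact absurd (by rw [hsu, branch_eq hdisj hyX hb] at hrs; exact hrs.symm) hnadj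
          · have hrw : r = w := branch_eq hdisj hyX hc
            exact ⟨a, by rw [hrw]; exact haYw, u₀, by rw [hsu]; exact hu₀Yu, hau₀⟩
        · exact ⟨y, hXmem r y hyX hya, z, hXmem s z hzX hza, hyz⟩
  refine ⟨Y, hYmodel, ?_⟩
  have hd1 : (X u \ {a}).ncard + 1 = (X u).ncard :=
    Set.ncard_diff_singleton_add_one ha (Set.toFinite _)
  have hd2 : (insert a (X w)).ncard = (X w).ncard + 1 :=
    Set.ncard_insert_of_notMem haXw (Set.toFinite _)
  have hsum : (∑ r, (Y r).ncard) = ∑ r, (X r).ncard := by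
    refine sum_two_aux (f := fun r => (Y r).ncard) (g := fun r => (X r).ncard)
      (u := u) (w := w) hwu'.symm ?_ ?_
    · simp only [hYu, hYw]; omega
    · intro r h1 h2; simp [hYo r h1 h2]
  have hsub : wastedSet G H Y ⊆ wastedSet G H X := by
    rintro ⟨e1, e2⟩ ⟨r, s, hrs, hnrs, h1, h2, hadj⟩
    rcases hYmem r e1 h1 with ⟨hm1, hn1⟩ | ⟨hrw, rfl⟩
    · rcases hYmem s e2 h2 with ⟨hm2, hn2⟩ | ⟨hsw, rfl⟩
      · exact ⟨r, s, hrs, hnrs, hm1, hm2, hadj⟩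
      · exfalso
        rcases hNa' e1 hadj.symm with rfl | rfl | rfl
        · exact hnrs (by rw [hsw, branch_eq hdisj hm1 hu₀]; exact huw)
        · exact hnrs (by rw [hsw, branch_eq hdisj hm1 hb]; exact hvw)
        · exact hrs ((branch_eq hdisj hm1 hc).trans hsw.symm)
    · exfalso
      rcases hYmem s e2 h2 with ⟨hm2, hn2⟩ | ⟨hsw, rfl⟩
      · rcases hNa' e2 hadj with rfl | rfl | rfl
        · exact hnrs (by rw [hrw, branch_eq hdisj hm2 hu₀]; exact huw.symm)
        · exact hnrs (by rw [hrw, branch_eq hdisj hm2 hb]; exact hvw.symm)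
        · exact hrs (hrw.trans (branch_eq hdisj hm2 hc).symm)
      · exact hrs (hrw.trans hsw.symm)
  have hmemX : (a, b) ∈ wastedSet G H X := ⟨u, v, huv, hnadj, ha, hb, hab⟩
  have hmemY : (a, b) ∉ wastedSet G H Y := by
    rintro ⟨r, s, hrs, hnrs, h1, h2, hadj⟩
    rcases hYmem r a h1 with ⟨hm1, hn1⟩ | ⟨hrw, _⟩
    · exact hn1 rfl
    · rcases hYmem s b h2 with ⟨hm2, hn2⟩ | ⟨hsw, hba'⟩
      · exact hnrs (by rw [hrw, branch_eq hdisj hm2 hb]; exact hvw.symm)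
      · exact hba hba'
  have hlt : (wastedSet G H Y).ncard < (wastedSet G H X).ncard :=
    Set.ncard_lt_ncard ((Set.ssubset_iff_of_subset hsub).mpr ⟨(a, b), hmemX, hmemY⟩)
      (Set.toFinite _)
  unfold mval
  rw [hsum]
  exact Nat.add_lt_add_left hlt _


lemma adj_mem_triple {V : Type} {G : SimpleGraph V} {z u1 u2 u3 y : V}
    (h : G.neighborSet z = {u1, u2, u3}) (hy : G.Adj z y) : y = u1 ∨ y = u2 ∨ y = u3 := by
  have hm := (G.mem_neighborSet z y).mpr hy
  rw [h] at hm
  simpa using hm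

theorem final {V W : Type} [Fintype V] [Fintype W]
    (G : SimpleGraph V) (H : SimpleGraph W)
    (hG : Sparsifiable G)
    (hH : ∀ w : W, 3 ≤ (H.neighborSet w).ncard)
    (hminor : ∃ X : W → Set V, IsMinorModel G H X) :
    ∃ X : W → Set V, IsMinorModel G H X ∧
      ∀ u v : W, u ≠ v → ¬ H.Adj u v → ∀ a ∈ X u, ∀ b ∈ X v, ¬ G.Adj a b := by
  classical
  obtain ⟨X₀, hX₀⟩ := hminor
  have hEx : ∃ n, ∃ X : W → Set V, IsMinorModel G H X ∧ mval G H X = n :=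
    ⟨mval G H X₀, X₀, hX₀, rfl⟩
  obtain ⟨X, hX, hXval⟩ := Nat.find_spec hEx
  have hmin : ∀ Y, IsMinorModel G H Y → mval G H X ≤ mval G H Y := by
    intro Y hY
    rw [hXval]
    exact Nat.find_min' hEx ⟨Y, hY, rfl⟩
  refine ⟨X, hX, ?_⟩
  intro u v huv hnadj a ha b hb hab
  have hdisj := hX.1
  have hnadj' : ¬ H.Adj v u := fun h => hnadj h.symm
  obtain ⟨degA, exA⟩ := key_lemma hG hH hX hmin huv hnadj ha hb hab
  obtain ⟨degB, exB⟩ := key_lemma hG hH hX hmin huv.symm hnadj' hb ha hab.symm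
  rcases hG a with hc1 | ⟨_, hc2⟩ | ⟨u₀, w₁, w₂, h01, h02, h12, hNa, hd0, h12adj⟩
  · omega
  · have := hc2 b ((G.mem_neighborSet a b).mpr hab)
    omega
  · have hbu₀ : b ≠ u₀ := by
      intro e
      rw [e] at degB
      omega
    have finish : ∀ c : V, G.neighborSet a = {u₀, b, c} → b ≠ c → c ≠ u₀ →
        G.Adj b c → False := by
      intro c hNa' hbc hcu₀ hadjbc
      have hacAdj : G.Adj a c := (G.mem_neighborSet a c).mp (by rw [hNa']; simp)
      have hau₀ : G.Adj a u₀ := (G.mem_neighborSet a u₀).mp (by rw [hNa']; simp)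
      rcases hG b with hc1' | ⟨_, hc2'⟩ | ⟨u₀', z₁, z₂, g01, g02, g12, hNb, hd0', g12adj⟩
      · omega
      · have := hc2' a ((G.mem_neighborSet b a).mpr hab.symm)
        omega
      · have hau₀' : a ≠ u₀' := by
          intro e
          rw [e] at degA
          omega
        have finish2 : ∀ c' : V, G.neighborSet b = {u₀', a, c'} → G.Adj a c' → False := by
          intro c' hNb' hac'
          have hbc'Adj : G.Adj b c' := (G.mem_neighborSet b c').mp (by rw [hNb']; simp)
          have hbu₀'Adj : G.Adj b u₀' := (G.mem_neighborSet b u₀').mp (by rw [hNb']; simp)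
          have hc'b : c' ≠ b := hbc'Adj.ne'
          have hc' : c' = u₀ ∨ c' = c := by
            rcases adj_mem_triple hNa' hac' with h | h | h
            · exact Or.inl h
            · exact absurd h hc'b
            · exact Or.inr h
          by_cases hcu : c ∈ X u
          · -- c and a are both in X u, both adjacent to b
            have keyC := key_lemma hG hH hX hmin huv hnadj hcu hb hadjbc.symm
            rcases adj_mem_triple hNb' hadjbc with hcc | hcc | hcc
            · rw [hcc] at keyC
              have := keyC.1
              omega
            · exact hacAdj.ne hcc.symm
            · -- c = c', so N b = {u₀', a, c}
              obtain ⟨tB, htBX, hBadj, hrestB⟩ := exB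
              have htB0 : tB = u₀' := by
                rcases adj_mem_triple hNb' hBadj with h | h | h
                · exact h
                · exact absurd (branch_eq hdisj htBX (h ▸ ha)) huv.symm
                · rw [← hcc] at h
                  exact absurd (branch_eq hdisj htBX (h ▸ hcu)) huv.symm
              rcases hrestB with ⟨t', ht'X, ht'adj, ht'ne⟩ | ⟨w₁', cb, hvw₁, hcbX, hcbadj⟩
              · rcases adj_mem_triple hNb' ht'adj with h | h | h
                · exact ht'ne (h.trans htB0.symm)
                · exact absurd (branch_eq hdisj ht'X (h ▸ ha)) huv.symm
                · rw [← hcc] at h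
                  exact absurd (branch_eq hdisj ht'X (h ▸ hcu)) huv.symm
              · rcases adj_mem_triple hNb' hcbadj with h | h | h
                · have : v = w₁' := branch_eq hdisj
                    (show cb ∈ X v by rw [h, ← htB0]; exact htBX) hcbX
                  exact H.irrefl (this ▸ hvw₁)
                · have : w₁' = u := branch_eq hdisj (h ▸ hcbX) ha
                  exact hnadj' (this ▸ hvw₁)
                · rw [← hcc] at h
                  have : w₁' = u := branch_eq hdisj (h ▸ hcbX) hcu
                  exact hnadj' (this ▸ hvw₁)
          · by_cases hcv : c ∈ X v
            · -- b and c both in X v, both adjacent to a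
              obtain ⟨tA, htAX, hAadj, hrestA⟩ := exA
              have htA0 : tA = u₀ := by
                rcases adj_mem_triple hNa' hAadj with h | h | h
                · exact h
                · exact absurd (branch_eq hdisj htAX (h ▸ hb)) huv
                · exact absurd (branch_eq hdisj htAX (h ▸ hcv)) huv
              rcases hrestA with ⟨t', ht'X, ht'adj, ht'ne⟩ | ⟨w₁', ca, huw₁, hcaX, hcaadj⟩
              · rcases adj_mem_triple hNa' ht'adj with h | h | h
                · exact ht'ne (h.trans htA0.symm)
                · exact absurd (branch_eq hdisj ht'X (h ▸ hb)) huv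
                · exact absurd (branch_eq hdisj ht'X (h ▸ hcv)) huv
              · rcases adj_mem_triple hNa' hcaadj with h | h | h
                · have : u = w₁' := branch_eq hdisj
                    (show ca ∈ X u by rw [h, ← htA0]; exact htAX) hcaX
                  exact H.irrefl (this ▸ huw₁)
                · have : w₁' = v := branch_eq hdisj (h ▸ hcaX) hb
                  exact hnadj (this ▸ huw₁)
                · have : w₁' = v := branch_eq hdisj (h ▸ hcaX) hcv
                  exact hnadj (this ▸ huw₁)
            · -- c is outside X u and X v
              obtain ⟨tA, htAX, hAadj, hrestA⟩ := exA
              have htA0 : tA = u₀ := by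
                rcases adj_mem_triple hNa' hAadj with h | h | h
                · exact h
                · exact absurd (branch_eq hdisj htAX (h ▸ hb)) huv
                · exact absurd (h ▸ htAX) hcu
              have hu₀X : u₀ ∈ X u := htA0 ▸ htAX
              rcases hrestA with ⟨t', ht'X, ht'adj, ht'ne⟩ | ⟨w, ca, huw, hcaX, hcaadj⟩
              · rcases adj_mem_triple hNa' ht'adj with h | h | h
                · exact ht'ne (h.trans htA0.symm)
                · exact absurd (branch_eq hdisj ht'X (h ▸ hb)) huv
                · exact absurd (h ▸ ht'X) hcu
              · rcases adj_mem_triple hNa' hcaadj with h | h | h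
                · exact huw.ne (branch_eq hdisj hu₀X (h ▸ hcaX))
                · exact hnadj (branch_eq hdisj (h ▸ hcaX) hb ▸ huw)
                · -- ca = c, so c ∈ X w
                  have hcw : c ∈ X w := h ▸ hcaX
                  have hwvne : w ≠ v := fun e => hcv (e ▸ hcw)
                  obtain ⟨tB, htBX, hBadj, hrestB⟩ := exB
                  have htB0 : tB = u₀' := by
                    rcases adj_mem_triple hNb' hBadj with h' | h' | h'
                    · exact h'
                    · exact absurd (branch_eq hdisj htBX (h' ▸ ha)) huv.symm
                    · rcases hc' with rfl | rfl
                      · exact absurd (branch_eq hdisj htBX (h' ▸ hu₀X)) huv.symm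
                      · exact absurd (branch_eq hdisj htBX (h' ▸ hcw)) hwvne.symm
                  rcases hrestB with ⟨t', ht'X, ht'adj, ht'ne⟩ | ⟨w₁', cb, hvw₁, hcbX, hcbadj⟩
                  · rcases adj_mem_triple hNb' ht'adj with h' | h' | h'
                    · exact ht'ne (h'.trans htB0.symm)
                    · exact absurd (branch_eq hdisj ht'X (h' ▸ ha)) huv.symm
                    · rcases hc' with rfl | rfl
                      · exact absurd (branch_eq hdisj ht'X (h' ▸ hu₀X)) huv.symm
                      · exact absurd (h' ▸ ht'X) hcv
                  · rcases adj_mem_triple hNb' hcbadj with h' | h' | h'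
                    · have : v = w₁' := branch_eq hdisj
                        (show cb ∈ X v by rw [h', ← htB0]; exact htBX) hcbX
                      exact H.irrefl (this ▸ hvw₁)
                    · have : w₁' = u := branch_eq hdisj (h' ▸ hcbX) ha
                      exact hnadj' (this ▸ hvw₁)
                    · rcases hc' with rfl | rfl
                      · have : w₁' = u := branch_eq hdisj (h' ▸ hcbX) hu₀X
                        exact hnadj' (this ▸ hvw₁)
                      · have hww : w₁' = w := branch_eq hdisj (h' ▸ hcbX) hcw
                        have hvw : H.Adj v w := hww ▸ hvw₁
                        obtain ⟨Y, hYm, hYlt⟩ :=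
                          surgery hX huv hnadj huw hvw ha hb hcw hNa' hu₀X hab
                        exact absurd (hmin Y hYm) (Nat.not_le.mpr hYlt)
        rcases adj_mem_triple hNb hab.symm with hax | hax | hax
        · exact hau₀' hax
        · refine finish2 z₂ ?_ ?_
          · rw [hNb, hax]
          · rw [hax]; exact g12adj
        · refine finish2 z₁ ?_ ?_
          · rw [hNb, hax, Set.pair_comm z₁ z₂]
          · rw [hax]; exact g12adj.symm
    rcases adj_mem_triple hNa hab with hbx | hbx | hbx
    · exact hbu₀ hbx
    · refine finish w₂ ?_ ?_ ?_ ?_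
      · rw [hNa, hbx]
      · rw [hbx]; exact h12
      · exact fun e => h02 e.symm
      · rw [hbx]; exact h12adj
    · refine finish w₁ ?_ ?_ ?_ ?_
      · rw [hNa, hbx, Set.pair_comm w₁ w₂]
      · rw [hbx]; exact h12.symm
      · exact fun e => h01 e.symm
      · rw [hbx]; exact h12adj.symm

theorem inducedMinor_of_minor_of_sparsifiable {V W : Type} [Fintype V] [Fintype W]
    (G : SimpleGraph V) (H : SimpleGraph W)
    (hG : Sparsifiable G)
    (hH : ∀ w : W, 3 ≤ (H.neighborSet w).ncard)
    (hminor : ContainsMinor G H) :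
    ContainsInducedMinor G H := by
  obtain ⟨X, hX, hind⟩ := final G H hG hH hminor
  exact ⟨X, hX, hind⟩

end Paper
end

section
/- For every integer k ≥ 3, if a sparsifiable finite simple graph contains the k×k-grid as a minor, then it contains the (k−2)×(k−2)-grid as an induced minor. -/
namespace Paper

open SimpleGraph

/-! ### helpers -/

section Helpers
variable {V : Type} {G : SimpleGraph V} {s : Set V}

lemma nbr_exists (hc : (G.induce s).Connected) {x y : V} (hx : x ∈ s) (hy : y ∈ s)
    (hxy : y ≠ x) : ∃ z ∈ s, z ≠ x ∧ G.Adj x z := by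
  obtain ⟨p⟩ := hc.preconnected ⟨x, hx⟩ ⟨y, hy⟩
  cases p with
  | nil => exact absurd rfl hxy.symm
  | @cons _ b _ h q =>
    have hadj : G.Adj x b.1 := h
    exact ⟨b.1, b.2, (G.ne_of_adj hadj).symm, hadj⟩

lemma connected_del (hc : (G.induce s).Connected) {x : V} (hx : x ∈ s)
    (hne : (s \ {x}).Nonempty)
    (hone : Set.Subsingleton {y | y ∈ s ∧ G.Adj x y}) :
    (G.induce (s \ {x})).Connected := by
  have key : ∀ n : ℕ, ∀ v w : s, ∀ hv : v.1 ≠ x, ∀ hw : w.1 ≠ x,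
      ∀ p : (G.induce s).Walk v w, p.length ≤ n →
      (G.induce (s \ {x})).Reachable ⟨v.1, ⟨v.2, hv⟩⟩ ⟨w.1, ⟨w.2, hw⟩⟩ := by
    intro n
    induction n with
    | zero =>
      intro v w hv hw p hp
      cases p with
      | nil => rfl
      | cons h q => simp at hp
    | succ n ih =>
      intro v w hv hw p hp
      cases p with
      | nil => rfl
      | @cons _ b _ h q =>
        by_cases hbx : b.1 = x
        · cases q with
          | nil => exact absurd hbx hw
          | @cons _ m _ h2 q2 =>
            have hadj1 : G.Adj x v.1 := by
              have : G.Adj v.1 b.1 := h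
              rw [hbx] at this; exact this.symm
            have hadj2 : G.Adj x m.1 := by
              have : G.Adj b.1 m.1 := h2
              rwa [hbx] at this
            have hmv : m = v := by
              apply Subtype.ext
              exact hone ⟨m.2, hadj2⟩ ⟨v.2, hadj1⟩
            subst hmv
            exact ih m w hv hw q2 (by simp at hp; omega)
        · have hstep : (G.induce (s \ {x})).Adj ⟨v.1, ⟨v.2, hv⟩⟩ ⟨b.1, ⟨b.2, hbx⟩⟩ := h
          exact (hstep.reachable).trans (ih b w hbx hw q (by simp at hp; omega))
  rw [connected_iff]
  refine ⟨?_, hne.to_subtype⟩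
  rintro ⟨v, hv, hvx⟩ ⟨w, hw, hwx⟩
  obtain ⟨p⟩ := hc.preconnected ⟨v, hv⟩ ⟨w, hw⟩
  exact key p.length ⟨v, hv⟩ ⟨w, hw⟩ hvx hwx p le_rfl

lemma connected_insert_s5 (hc : (G.induce s).Connected) {a c : V} (hcs : c ∈ s)
    (hadj : G.Adj a c) : (G.induce (insert a s)).Connected := by
  have h2 : (G.induce {a, c}).Connected := G.induce_pair_connected_of_adj hadj
  have := G.induce_union_connected h2.preconnected hc.preconnected ⟨c, by simp, hcs⟩
  have hset : ({a, c} : Set V) ∪ s = insert a s := by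
    ext y; simp only [Set.mem_union, Set.mem_insert_iff, Set.mem_singleton_iff]
    constructor
    · rintro ((h|h)|h)
      · exact Or.inl h
      · exact Or.inr (h ▸ hcs)
      · exact Or.inr h
    · rintro (h|h)
      · exact Or.inl (Or.inl h)
      · exact Or.inr h
  rwa [hset] at this

lemma ncard_ge_three {s : Set V} {a b c : V} (ha : a ∈ s) (hb : b ∈ s) (hc : c ∈ s)
    (hab : a ≠ b) (hac : a ≠ c) (hbc : b ≠ c) (hfin : s.Finite) : 3 ≤ s.ncard := by
  have h1 : ({a, b, c} : Set V).ncard = 3 := by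
    rw [Set.ncard_insert_of_notMem (by simp [hab, hac]) ((hfin.subset (by
      intro y hy; rcases hy with h|h <;> simp_all))),
        Set.ncard_insert_of_notMem (by simp [hbc]) (hfin.subset (by
      intro y hy; simp_all)), Set.ncard_singleton]
  calc 3 = ({a, b, c} : Set V).ncard := h1.symm
    _ ≤ s.ncard := Set.ncard_le_ncard (by intro y hy; rcases hy with h|h|h <;> simp_all) hfin

lemma exists_third {s : Set V} {a c : V} (hcard : s.ncard = 3) (ha : a ∈ s)
    (hc : c ∈ s) (hac : a ≠ c) (hfin : s.Finite) : ∃ x, x ≠ a ∧ x ≠ c ∧ s = {a, c, x} := by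
  have hne : (s \ {a, c}).Nonempty := by
    rw [Set.nonempty_iff_ne_empty]
    intro h
    have hsub : s ⊆ {a, c} := by
      intro y hy
      by_contra hy2
      exact absurd (Set.mem_diff_of_mem hy hy2) (by simp [h])
    have := Set.ncard_le_ncard hsub (Set.toFinite _)
    have h2 : ({a, c} : Set V).ncard ≤ 2 := by
      apply le_trans (Set.ncard_insert_le _ _); simp [Set.ncard_singleton]
    omega
  obtain ⟨x, hxs, hxac⟩ := hne
  simp only [Set.mem_insert_iff, Set.mem_singleton_iff, not_or] at hxac
  refine ⟨x, hxac.1, hxac.2, ?_⟩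
  have h3 : ({a, c, x} : Set V).ncard = 3 := by
    rw [Set.ncard_insert_of_notMem (by simp [hac, Ne.symm hxac.1]) (hfin.subset (by
      intro y hy; rcases hy with h|h <;> simp_all)),
        Set.ncard_insert_of_notMem (by simp [Ne.symm hxac.2]) (hfin.subset (by
      intro y hy; simp_all)), Set.ncard_singleton]
  refine (Set.eq_of_subset_of_ncard_le ?_ (by omega) hfin).symm
  intro y hy
  rcases hy with h|h|h
  · exact h ▸ ha
  · exact h ▸ hc
  · exact h ▸ hxs

lemma eq_singleton_or_exists_ne {s : Set V} {b : V} (hb : b ∈ s) :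
    s = {b} ∨ ∃ y ∈ s, y ≠ b := by
  by_cases h : ∀ y ∈ s, y = b
  · left; ext y; exact ⟨fun hy => h y hy, fun hy => hy ▸ hb⟩
  · right; push_neg at h; exact h

end Helpers

/-! ### grid helpers -/

def GInner (k : ℕ) (z : Fin k × Fin k) : Prop :=
  1 ≤ z.1.val ∧ z.1.val ≤ k - 2 ∧ 1 ≤ z.2.val ∧ z.2.val ≤ k - 2

lemma grid_adj_iff {k : ℕ} {u v : Fin k × Fin k} :
    (grid k).Adj u v ↔ Nat.dist u.1.val v.1.val + Nat.dist u.2.val v.2.val = 1 := Iff.rfl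

lemma inner_three_nbrs {k : ℕ} (hk : 3 ≤ k) {z : Fin k × Fin k} (hz : GInner k z) :
    ∃ z₁ z₂ z₃ : Fin k × Fin k, z₁ ≠ z₂ ∧ z₁ ≠ z₃ ∧ z₂ ≠ z₃ ∧
      (grid k).Adj z z₁ ∧ (grid k).Adj z z₂ ∧ (grid k).Adj z z₃ := by
  obtain ⟨⟨i, hi⟩, ⟨j, hj⟩⟩ := z
  obtain ⟨h1, h2, h3, h4⟩ := hz
  simp only at h1 h2 h3 h4
  refine ⟨((⟨i-1, by omega⟩ : Fin k), ⟨j, hj⟩), ((⟨i+1, by omega⟩ : Fin k), ⟨j, hj⟩),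
      ((⟨i, hi⟩ : Fin k), ⟨j-1, by omega⟩), ?_, ?_, ?_, ?_, ?_, ?_⟩
  · intro h; have := congrArg (fun p => p.1.val) h; simp at this <;> omega
  · intro h; have := congrArg (fun p => p.2.val) h; simp at this <;> omega
  · intro h; have := congrArg (fun p => p.2.val) h; simp at this <;> omega
  all_goals
    rw [grid_adj_iff]; simp only [Nat.dist]; omega

def emb (k : ℕ) (hk : 3 ≤ k) (p : Fin (k-2) × Fin (k-2)) : Fin k × Fin k :=
  (⟨p.1.val + 1, by have := p.1.isLt; omega⟩, ⟨p.2.val + 1, by have := p.2.isLt; omega⟩)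

lemma emb_inj {k : ℕ} (hk : 3 ≤ k) {p q : Fin (k-2) × Fin (k-2)}
    (h : emb k hk p = emb k hk q) : p = q := by
  obtain ⟨⟨a,ha⟩,⟨b,hb⟩⟩ := p; obtain ⟨⟨c,hc⟩,⟨d,hd⟩⟩ := q
  have h1 := congrArg (fun z => z.1.val) h
  have h2 := congrArg (fun z => z.2.val) h
  simp [emb] at h1 h2
  simp [Prod.ext_iff, Fin.ext_iff, h1, h2]

lemma emb_adj {k : ℕ} (hk : 3 ≤ k) (p q : Fin (k-2) × Fin (k-2)) :
    (grid (k-2)).Adj p q ↔ (grid k).Adj (emb k hk p) (emb k hk q) := by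
  rw [grid_adj_iff, grid_adj_iff]
  simp only [emb, Nat.dist]
  omega

lemma emb_inner {k : ℕ} (hk : 3 ≤ k) (p : Fin (k-2) × Fin (k-2)) :
    GInner k (emb k hk p) := by
  have := p.1.isLt; have := p.2.isLt
  exact ⟨by simp [emb], by simp [emb], by simp [emb], by simp [emb]⟩

/-! ### main machinery -/

section Main

variable {V : Type} [Fintype V] {G : SimpleGraph V} {k : ℕ}

noncomputable def total (k : ℕ) {V : Type} [Fintype V] (X : Fin k × Fin k → Set V) : ℕ :=
  ∑ z : Fin k × Fin k, (X z).ncard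

def Minimal' (G : SimpleGraph V) (k : ℕ) (X : Fin k × Fin k → Set V) : Prop :=
  IsMinorModel G (grid k) X ∧ ∀ X', IsMinorModel G (grid k) X' → total k X ≤ total k X'

def InnerBad (G : SimpleGraph V) (k : ℕ) (X : Fin k × Fin k → Set V) : Set (V × V) :=
  {p | G.Adj p.1 p.2 ∧ ∃ z z', z ≠ z' ∧ ¬ (grid k).Adj z z' ∧ GInner k z ∧ GInner k z' ∧
    p.1 ∈ X z ∧ p.2 ∈ X z'}

lemma uniq {X : Fin k × Fin k → Set V} (hd : Pairwise (fun u v => Disjoint (X u) (X v)))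
    {x : V} {z z' : Fin k × Fin k} (h1 : x ∈ X z) (h2 : x ∈ X z') : z = z' := by
  by_contra h
  exact Set.disjoint_left.mp (hd h) h1 h2

lemma exists_minimal (h : ContainsMinor G (grid k)) :
    ∃ X, Minimal' G k X := by
  obtain ⟨X0, hX0⟩ := h
  have hne : {n | ∃ X, IsMinorModel G (grid k) X ∧ total k X = n}.Nonempty := ⟨_, X0, hX0, rfl⟩
  obtain ⟨X, hX, htot⟩ := Nat.sInf_mem hne
  refine ⟨X, hX, fun X' hX' => ?_⟩
  rw [htot]
  exact Nat.sInf_le ⟨X', hX', rfl⟩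




lemma ncard_ge_two {s : Set V} {a b : V} (ha : a ∈ s) (hb : b ∈ s)
    (hab : a ≠ b) (hfin : s.Finite) : 2 ≤ s.ncard := by
  have h1 : ({a, b} : Set V).ncard = 2 := by
    rw [Set.ncard_insert_of_notMem (by simp [hab]) (hfin.subset (by intro y hy; simp_all)),
      Set.ncard_singleton]
  calc 2 = ({a, b} : Set V).ncard := h1.symm
    _ ≤ s.ncard := Set.ncard_le_ncard (by intro y hy; rcases hy with h|h <;> simp_all) hfin

lemma no_removal {X : Fin k × Fin k → Set V} (hmin : Minimal' G k X) {z : Fin k × Fin k} {x : V}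
    (hx : x ∈ X z) (hne : (X z \ {x}).Nonempty)
    (hone : Set.Subsingleton {y | y ∈ X z ∧ G.Adj x y}) :
    ∃ z', (grid k).Adj z z' ∧ ∃ y ∈ X z', G.Adj x y := by
  by_contra hno
  push_neg at hno
  obtain ⟨⟨hd, hconn, hedge⟩, hm⟩ := hmin
  set X' := Function.update X z (X z \ {x}) with hX'def
  have hX'z : X' z = X z \ {x} := Function.update_self _ _ _
  have hX'o : ∀ z', z' ≠ z → X' z' = X z' := fun z' h => Function.update_of_ne h _ _
  have hsub : ∀ z', X' z' ⊆ X z' := by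
    intro z'
    by_cases h : z' = z
    · subst h; rw [hX'z]; exact Set.diff_subset
    · rw [hX'o z' h]
  have hmodel : IsMinorModel G (grid k) X' := by
    refine ⟨fun p q hpq => (hd hpq).mono (hsub p) (hsub q), ?_, ?_⟩
    · intro p
      by_cases h : p = z
      · subst h; rw [hX'z]
        exact connected_del (hconn p) hx hne hone
      · rw [hX'o p h]; exact hconn p
    · intro p q hpq
      obtain ⟨α, hα, β, hβ, hαβ⟩ := hedge p q hpq
      have hαx : α ≠ x := by
        intro h; subst h
        have hp : p = z := uniq hd hα hx
        subst hp
        exact hno q hpq β hβ hαβ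
      have hβx : β ≠ x := by
        intro h; subst h
        have hq : q = z := uniq hd hβ hx
        subst hq
        exact hno p hpq.symm α hα hαβ.symm
      refine ⟨α, ?_, β, ?_, hαβ⟩
      · by_cases h : p = z
        · subst h; rw [hX'z]; exact ⟨hα, hαx⟩
        · rw [hX'o p h]; exact hα
      · by_cases h : q = z
        · subst h; rw [hX'z]; exact ⟨hβ, hβx⟩
        · rw [hX'o q h]; exact hβ
  have hlt : total k X' < total k X := by
    rw [total, total]
    apply Finset.sum_lt_sum
    · intro i _
      exact Set.ncard_le_ncard (hsub i) (Set.toFinite _)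
    · refine ⟨z, Finset.mem_univ z, ?_⟩
      rw [hX'z]
      exact Set.ncard_lt_ncard (Set.sdiff_singleton_ssubset.mpr hx) (Set.toFinite _)
  exact absurd (hm X' hmodel) (by omega)

lemma singleton_three (hk : 3 ≤ k) {X : Fin k × Fin k → Set V}
    (hX : IsMinorModel G (grid k) X) {z : Fin k × Fin k} {x : V}
    (hz : GInner k z) (hXz : X z = {x}) :
    ∃ y₁ y₂ y₃ z₁ z₂ z₃, (y₁ ≠ y₂ ∧ y₁ ≠ y₃ ∧ y₂ ≠ y₃) ∧
      (G.Adj x y₁ ∧ G.Adj x y₂ ∧ G.Adj x y₃) ∧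
      y₁ ∈ X z₁ ∧ y₂ ∈ X z₂ ∧ y₃ ∈ X z₃ ∧
      (grid k).Adj z z₁ ∧ (grid k).Adj z z₂ ∧ (grid k).Adj z z₃ := by
  obtain ⟨hd, hconn, hedge⟩ := hX
  obtain ⟨z₁, z₂, z₃, h12, h13, h23, ha1, ha2, ha3⟩ := inner_three_nbrs hk hz
  obtain ⟨α₁, hα₁, β₁, hβ₁, h1⟩ := hedge z z₁ ha1
  obtain ⟨α₂, hα₂, β₂, hβ₂, h2⟩ := hedge z z₂ ha2
  obtain ⟨α₃, hα₃, β₃, hβ₃, h3⟩ := hedge z z₃ ha3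
  rw [hXz, Set.mem_singleton_iff] at hα₁ hα₂ hα₃
  subst hα₁; subst hα₂; subst hα₃
  refine ⟨β₁, β₂, β₃, z₁, z₂, z₃, ⟨?_, ?_, ?_⟩, ⟨h1, h2, h3⟩, hβ₁, hβ₂, hβ₃, ha1, ha2, ha3⟩
  · intro h; exact h12 (uniq hd (h ▸ hβ₁) hβ₂)
  · intro h; exact h13 (uniq hd (h ▸ hβ₁) hβ₃)
  · intro h; exact h23 (uniq hd (h ▸ hβ₂) hβ₃)

lemma deg_three (hk : 3 ≤ k) (hG : Sparsifiable G) {X : Fin k × Fin k → Set V}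
    (hmin : Minimal' G k X) {a b : V} {u v : Fin k × Fin k}
    (hadj : G.Adj a b) (ha : a ∈ X u) (hb : b ∈ X v)
    (hnadj : ¬ (grid k).Adj u v) (hune : u ≠ v) (hu : GInner k u) :
    (G.neighborSet a).ncard = 3 := by
  obtain ⟨⟨hd, hconn, hedge⟩, hle⟩ := hmin
  have hbXu : b ∉ X u := fun h => hune (uniq hd h hb)
  have h3 : 3 ≤ (G.neighborSet a).ncard := by
    by_contra hcard
    push_neg at hcard
    rcases eq_singleton_or_exists_ne ha with hXu | ⟨y, hy, hyne⟩
    · obtain ⟨y₁, y₂, y₃, z₁, z₂, z₃, ⟨h12, h13, h23⟩, ⟨hb1, hb2, hb3⟩, -⟩ :=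
        singleton_three hk ⟨hd, hconn, hedge⟩ hu hXu
      have := ncard_ge_three ((G.mem_neighborSet a y₁).mpr hb1) ((G.mem_neighborSet a y₂).mpr hb2)
        ((G.mem_neighborSet a y₃).mpr hb3) h12 h13 h23 (Set.toFinite _)
      omega
    · obtain ⟨p, hp, hpa, hap⟩ := nbr_exists (hconn u) ha hy hyne
      have hone : Set.Subsingleton {y | y ∈ X u ∧ G.Adj a y} := by
        have hsub2 : {y | y ∈ X u ∧ G.Adj a y} ⊆ G.neighborSet a \ {b} := by
          rintro t ⟨htu, hat⟩
          exact ⟨hat, fun h => hbXu ((h : t = b) ▸ htu)⟩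
        have hc2 : (G.neighborSet a \ {b}).ncard ≤ 1 := by
          rw [Set.ncard_diff_singleton_of_mem ((G.mem_neighborSet a b).mpr hadj)]
          omega
        refine Set.Subsingleton.anti ?_ hsub2
        intro x1 h1 x2 h2
        exact (Set.ncard_le_one (Set.toFinite _)).mp hc2 x1 h1 x2 h2
      obtain ⟨z', hz', y', hy', hay'⟩ := no_removal ⟨⟨hd, hconn, hedge⟩, hle⟩ ha ⟨p, hp, hpa⟩ hone
      have hz'v : z' ≠ v := fun h => hnadj (h ▸ hz')
      have hz'u : z' ≠ u := fun h => (grid k).loopless.irrefl u (h ▸ hz')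
      have hy'b : y' ≠ b := fun h => hz'v (uniq hd (h ▸ hy') hb)
      have hy'p : y' ≠ p := fun h => hz'u (uniq hd (h ▸ hy') hp)
      have hpb : p ≠ b := fun h => hune (uniq hd hp (h ▸ hb))
      have := ncard_ge_three (G.mem_neighborSet a b |>.mpr hadj)
        (G.mem_neighborSet a p |>.mpr hap) (G.mem_neighborSet a y' |>.mpr hay')
        (Ne.symm hpb) (Ne.symm hy'b) (Ne.symm hy'p) (Set.toFinite _)
      omega
  rcases hG a with h | h | ⟨s, w₁, w₂, hsw1, hsw2, hw12, hset, -, -⟩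
  · omega
  · exact h.1
  · rw [hset]
    rw [Set.ncard_insert_of_notMem (by simp [hsw1, hsw2]) (Set.toFinite _),
      Set.ncard_insert_of_notMem (by simp [hw12]) (Set.toFinite _), Set.ncard_singleton]

lemma triangle_at (hG : Sparsifiable G) {a b : V}
    (ha3 : (G.neighborSet a).ncard = 3) (hb3 : (G.neighborSet b).ncard = 3)
    (hadj : G.Adj a b) :
    ∃ u₀ c, c ≠ b ∧ G.Adj a c ∧ G.Adj b c ∧
      (∀ y, G.Adj a y ↔ (y = u₀ ∨ y = b ∨ y = c)) := by
  rcases hG a with h | h | ⟨s, w₁, w₂, hsw1, hsw2, hw12, hset, hsdeg, hadj12⟩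
  · omega
  · exact absurd (h.2 b (G.mem_neighborSet a b |>.mpr hadj)) (by omega)
  · have hb : b ∈ G.neighborSet a := G.mem_neighborSet a b |>.mpr hadj
    rw [hset] at hb
    have hmem : ∀ y, G.Adj a y ↔ y ∈ ({s, w₁, w₂} : Set V) := by
      intro y; rw [← hset]; exact (G.mem_neighborSet a y).symm
    rcases hb with hb | hb | hb
    · exact absurd hb3 (by rw [← hb] at hsdeg; omega)
    · refine ⟨s, w₂, fun h => hw12 (h.symm ▸ hb.symm ▸ rfl), ?_, ?_, ?_⟩
      · exact (hmem w₂).mpr (by simp)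
      · exact hb ▸ hadj12
      · intro y; rw [hmem y, ← hb]
        simp only [Set.mem_insert_iff, Set.mem_singleton_iff] <;> tauto
    · refine ⟨s, w₁, fun h => hw12 (hb ▸ h), ?_, ?_, ?_⟩
      · exact (hmem w₁).mpr (by simp)
      · exact hb ▸ hadj12.symm
      · intro y; rw [hmem y, ← hb]
        simp only [Set.mem_insert_iff, Set.mem_singleton_iff] <;> tauto


lemma step (hk : 3 ≤ k) (hG : Sparsifiable G) {X : Fin k × Fin k → Set V}
    (hmin : Minimal' G k X) {a b : V} (hab : (a, b) ∈ InnerBad G k X) :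
    ∃ X', Minimal' G k X' ∧ InnerBad G k X' ⊂ InnerBad G k X := by
  classical
  obtain ⟨hadj0, u, v, huv, hnadj, hu, hv, ha0, hb0⟩ := hab
  have hadj : G.Adj a b := hadj0
  have ha : a ∈ X u := ha0
  have hb : b ∈ X v := hb0
  clear hadj0 ha0 hb0
  obtain ⟨⟨hd, hconn, hedge⟩, hle⟩ := hmin
  have hmin' : Minimal' G k X := ⟨⟨hd, hconn, hedge⟩, hle⟩
  have hnadj' : ¬ (grid k).Adj v u := fun h => hnadj h.symm
  have ha3 := deg_three hk hG hmin' hadj ha hb hnadj huv hu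
  have hb3 := deg_three hk hG hmin' hadj.symm hb ha hnadj' huv.symm hv
  obtain ⟨u₀, c, hcb, hac, hbc, henuma⟩ := triangle_at hG ha3 hb3 hadj
  have hca : c ≠ a := hac.ne'
  have hbXu : b ∉ X u := fun h => huv (uniq hd h hb)
  have haXv : a ∉ X v := fun h => huv (uniq hd ha h)
  have hau₀ : G.Adj a u₀ := (henuma u₀).mpr (Or.inl rfl)
  have hu₀a : u₀ ≠ a := hau₀.ne'
  -- enumeration of the neighbours of b
  obtain ⟨v₀, hv₀a, hv₀c, hsetb⟩ := exists_third hb3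
    ((G.mem_neighborSet b a).mpr hadj.symm) ((G.mem_neighborSet b c).mpr hbc) hca.symm
    (Set.toFinite _)
  have henumb : ∀ y, G.Adj b y ↔ (y = a ∨ y = c ∨ y = v₀) := by
    intro y
    rw [← G.mem_neighborSet, hsetb]
    simp only [Set.mem_insert_iff, Set.mem_singleton_iff]
  have hbv₀ : G.Adj b v₀ := (henumb v₀).mpr (Or.inr (Or.inr rfl))
  have hv₀b : v₀ ≠ b := hbv₀.ne'
  -- c is not in X u
  have hcXu : c ∉ X u := by
    intro hcXu
    rcases eq_singleton_or_exists_ne hb with hXv | ⟨y, hy, hyb⟩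
    · obtain ⟨y₁, y₂, y₃, z₁, z₂, z₃, ⟨h12, h13, h23⟩, ⟨hb1, hb2, hb3'⟩,
        hm1, hm2, hm3, hz1, hz2, hz3⟩ := singleton_three hk ⟨hd, hconn, hedge⟩ hv hXv
      have key : ∀ y z₀, G.Adj b y → y ∈ X z₀ → (grid k).Adj v z₀ → y = v₀ := by
        intro y z₀ hby hyz hvz
        rcases (henumb y).mp hby with h|h|h
        · exact absurd ((uniq hd (h ▸ hyz) ha) ▸ hvz) hnadj'
        · exact absurd ((uniq hd (h ▸ hyz) hcXu) ▸ hvz) hnadj'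
        · exact h
      exact h12 ((key y₁ z₁ hb1 hm1 hz1).trans (key y₂ z₂ hb2 hm2 hz2).symm)
    · have key : ∀ t, t ∈ X v → G.Adj b t → t = v₀ := by
        intro t ht hbt
        rcases (henumb t).mp hbt with h|h|h
        · exact absurd (h ▸ ht) haXv
        · exact absurd (uniq hd (h ▸ ht) hcXu) huv.symm
        · exact h
      obtain ⟨p, hp, hpb, hbp⟩ := nbr_exists (hconn v) hb hy hyb
      have hone : Set.Subsingleton {y | y ∈ X v ∧ G.Adj b y} := by
        rintro t ⟨ht, hbt⟩ t' ⟨ht', hbt'⟩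
        rw [key t ht hbt, key t' ht' hbt']
      obtain ⟨z', hz', y', hy', hby'⟩ := no_removal hmin' hb ⟨p, hp, hpb⟩ hone
      rcases (henumb y').mp hby' with h|h|h
      · exact absurd ((uniq hd (h ▸ hy') ha) ▸ hz') hnadj'
      · exact absurd ((uniq hd (h ▸ hy') hcXu) ▸ hz') hnadj'
      · have hv₀Xv : v₀ ∈ X v := key p hp hbp ▸ hp
        exact absurd ((uniq hd (h ▸ hy') hv₀Xv) ▸ hz') ((grid k).loopless.irrefl v)
  -- c is not in X v
  have hcXv : c ∉ X v := by
    intro hcXv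
    rcases eq_singleton_or_exists_ne ha with hXu | ⟨y, hy, hya⟩
    · obtain ⟨y₁, y₂, y₃, z₁, z₂, z₃, ⟨h12, h13, h23⟩, ⟨ha1, ha2, ha3'⟩,
        hm1, hm2, hm3, hz1, hz2, hz3⟩ := singleton_three hk ⟨hd, hconn, hedge⟩ hu hXu
      have key : ∀ y z₀, G.Adj a y → y ∈ X z₀ → (grid k).Adj u z₀ → y = u₀ := by
        intro y z₀ hay hyz huz
        rcases (henuma y).mp hay with h|h|h
        · exact h
        · exact absurd ((uniq hd (h ▸ hyz) hb) ▸ huz) hnadj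
        · exact absurd ((uniq hd (h ▸ hyz) hcXv) ▸ huz) hnadj
      exact h12 ((key y₁ z₁ ha1 hm1 hz1).trans (key y₂ z₂ ha2 hm2 hz2).symm)
    · have key : ∀ t, t ∈ X u → G.Adj a t → t = u₀ := by
        intro t ht hat
        rcases (henuma t).mp hat with h|h|h
        · exact h
        · exact absurd (h ▸ ht) hbXu
        · exact absurd (uniq hd (h ▸ ht) hcXv) huv
      obtain ⟨p, hp, hpa, hap⟩ := nbr_exists (hconn u) ha hy hya
      have hone : Set.Subsingleton {y | y ∈ X u ∧ G.Adj a y} := by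
        rintro t ⟨ht, hat⟩ t' ⟨ht', hat'⟩
        rw [key t ht hat, key t' ht' hat']
      obtain ⟨z', hz', y', hy', hay'⟩ := no_removal hmin' ha ⟨p, hp, hpa⟩ hone
      rcases (henuma y').mp hay' with h|h|h
      · have hu₀Xu : u₀ ∈ X u := key p hp hap ▸ hp
        exact absurd ((uniq hd (h ▸ hy') hu₀Xu) ▸ hz') ((grid k).loopless.irrefl u)
      · exact absurd ((uniq hd (h ▸ hy') hb) ▸ hz') hnadj
      · exact absurd ((uniq hd (h ▸ hy') hcXv) ▸ hz') hnadj
  -- X u is not a singleton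
  have hXune : ∃ y ∈ X u, y ≠ a := by
    rcases eq_singleton_or_exists_ne ha with hXu | h
    · exfalso
      obtain ⟨y₁, y₂, y₃, z₁, z₂, z₃, ⟨h12, h13, h23⟩, ⟨ha1, ha2, ha3'⟩,
        hm1, hm2, hm3, hz1, hz2, hz3⟩ := singleton_three hk ⟨hd, hconn, hedge⟩ hu hXu
      have key : ∀ y z₀, G.Adj a y → y ∈ X z₀ → (grid k).Adj u z₀ → y = u₀ ∨ y = c := by
        intro y z₀ hay hyz huz
        rcases (henuma y).mp hay with h|h|h
        · exact Or.inl h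
        · exact absurd ((uniq hd (h ▸ hyz) hb) ▸ huz) hnadj
        · exact Or.inr h
      have hy1c : ∀ y z₀, G.Adj a y → y ∈ X z₀ → (grid k).Adj u z₀ → True := fun _ _ _ _ _ => trivial
      rcases key y₁ z₁ ha1 hm1 hz1 with e1|e1 <;> rcases key y₂ z₂ ha2 hm2 hz2 with e2|e2 <;>
        rcases key y₃ z₃ ha3' hm3 hz3 with e3|e3 <;>
        first
          | exact h12 (e1.trans e2.symm)
          | exact h13 (e1.trans e3.symm)
          | exact h23 (e2.trans e3.symm)
    · exact h
  -- u₀ ∈ X u and it is the unique neighbour of a there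
  have keyu : ∀ t, t ∈ X u → G.Adj a t → t = u₀ := by
    intro t ht hat
    rcases (henuma t).mp hat with h|h|h
    · exact h
    · exact absurd (h ▸ ht) hbXu
    · exact absurd (h ▸ ht) hcXu
  obtain ⟨y, hy, hya⟩ := hXune
  obtain ⟨pu, hpu, hpua, hapu⟩ := nbr_exists (hconn u) ha hy hya
  have hu₀Xu : u₀ ∈ X u := keyu pu hpu hapu ▸ hpu
  have honeu : Set.Subsingleton {y | y ∈ X u ∧ G.Adj a y} := by
    rintro t ⟨ht, hat⟩ t' ⟨ht', hat'⟩
    rw [keyu t ht hat, keyu t' ht' hat']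
  -- the vertex c lies in a branch set X w with u adjacent to w
  obtain ⟨w, hadjuw, y', hy', hay'⟩ := no_removal hmin' ha ⟨pu, hpu, hpua⟩ honeu
  have hy'c : y' = c := by
    rcases (henuma y').mp hay' with h|h|h
    · exact absurd ((uniq hd (h ▸ hy') hu₀Xu) ▸ hadjuw) ((grid k).loopless.irrefl u)
    · exact absurd ((uniq hd (h ▸ hy') hb) ▸ hadjuw) hnadj
    · exact h
  have hcXw : c ∈ X w := hy'c ▸ hy'
  have hwu : w ≠ u := fun h => (grid k).loopless.irrefl u (h ▸ hadjuw)
  have hwv : w ≠ v := fun h => hnadj (h ▸ hadjuw)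
  -- X v is not a singleton; v₀ ∈ X v, unique neighbour of b there
  have keyv : ∀ t, t ∈ X v → G.Adj b t → t = v₀ := by
    intro t ht hbt
    rcases (henumb t).mp hbt with h|h|h
    · exact absurd (h ▸ ht) haXv
    · exact absurd (uniq hd (h ▸ ht) hcXw) hwv.symm
    · exact h
  have hXvne : ∃ y ∈ X v, y ≠ b := by
    rcases eq_singleton_or_exists_ne hb with hXv | h
    · exfalso
      obtain ⟨y₁, y₂, y₃, z₁, z₂, z₃, ⟨h12, h13, h23⟩, ⟨hb1, hb2, hb3'⟩,
        hm1, hm2, hm3, hz1, hz2, hz3⟩ := singleton_three hk ⟨hd, hconn, hedge⟩ hv hXv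
      have key : ∀ y z₀, G.Adj b y → y ∈ X z₀ → (grid k).Adj v z₀ → y = c ∨ y = v₀ := by
        intro y z₀ hby hyz hvz
        rcases (henumb y).mp hby with h|h|h
        · exact absurd ((uniq hd (h ▸ hyz) ha) ▸ hvz) hnadj'
        · exact Or.inl h
        · exact Or.inr h
      rcases key y₁ z₁ hb1 hm1 hz1 with e1|e1 <;> rcases key y₂ z₂ hb2 hm2 hz2 with e2|e2 <;>
        rcases key y₃ z₃ hb3' hm3 hz3 with e3|e3 <;>
        first
          | exact h12 (e1.trans e2.symm)
          | exact h13 (e1.trans e3.symm)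
          | exact h23 (e2.trans e3.symm)
    · exact h
  obtain ⟨yv, hyv, hyvb⟩ := hXvne
  obtain ⟨pv, hpv, hpvb, hbpv⟩ := nbr_exists (hconn v) hb hyv hyvb
  have hv₀Xv : v₀ ∈ X v := keyv pv hpv hbpv ▸ hpv
  have honev : Set.Subsingleton {y | y ∈ X v ∧ G.Adj b y} := by
    rintro t ⟨ht, hbt⟩ t' ⟨ht', hbt'⟩
    rw [keyv t ht hbt, keyv t' ht' hbt']
  -- w is adjacent to v as well
  have hadjvw : (grid k).Adj v w := by
    obtain ⟨w', hadjvw', y', hy', hby'⟩ := no_removal hmin' hb ⟨pv, hpv, hpvb⟩ honev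
    rcases (henumb y').mp hby' with h|h|h
    · exact absurd ((uniq hd (h ▸ hy') ha) ▸ hadjvw') hnadj'
    · exact (uniq hd (h ▸ hy') hcXw) ▸ hadjvw'
    · exact absurd ((uniq hd (h ▸ hy') hv₀Xv) ▸ hadjvw') ((grid k).loopless.irrefl v)
  -- remaining membership facts
  have haXw : a ∉ X w := fun h => hwu (uniq hd h ha)
  have hbXw : b ∉ X w := fun h => hwv (uniq hd h hb)
  -- the surgery
  have hu₀b : u₀ ≠ b := fun e => hbXu (e ▸ hu₀Xu)
  have hv₀a : v₀ ≠ a := fun e => haXv (e ▸ hv₀Xv)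
  set X' : Fin k × Fin k → Set V :=
    Function.update (Function.update (Function.update X u (X u \ {a})) v (X v \ {b})) w
      (X w ∪ {a, b}) with hX'def
  have hX'w : X' w = X w ∪ {a, b} := by
    rw [hX'def, Function.update_self]
  have hX'v : X' v = X v \ {b} := by
    rw [hX'def, Function.update_of_ne hwv.symm, Function.update_self]
  have hX'u : X' u = X u \ {a} := by
    rw [hX'def, Function.update_of_ne hwu.symm, Function.update_of_ne huv,
      Function.update_self]
  have hX'z : ∀ z, z ≠ u → z ≠ v → z ≠ w → X' z = X z := by
    intro z h1 h2 h3
    rw [hX'def, Function.update_of_ne h3, Function.update_of_ne h2, Function.update_of_ne h1]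
  have hmemX' : ∀ z x, x ∈ X' z → (x ∈ X z ∧ x ≠ a ∧ x ≠ b) ∨ ((x = a ∨ x = b) ∧ z = w) := by
    intro z x hx
    by_cases hzw : z = w
    · rw [hzw, hX'w] at hx
      rw [hzw]
      rcases hx with hx | hx
      · exact Or.inl ⟨hx, fun h => haXw (h ▸ hx), fun h => hbXw (h ▸ hx)⟩
      · rcases hx with hx | hx
        · exact Or.inr ⟨Or.inl hx, rfl⟩
        · exact Or.inr ⟨Or.inr hx, rfl⟩
    · by_cases hzv : z = v
      · rw [hzv, hX'v] at hx
        rw [hzv]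
        exact Or.inl ⟨hx.1, fun h => haXv (h ▸ hx.1), hx.2⟩
      · by_cases hzu : z = u
        · rw [hzu, hX'u] at hx
          rw [hzu]
          exact Or.inl ⟨hx.1, hx.2, fun h => hbXu (h ▸ hx.1)⟩
        · rw [hX'z z hzu hzv hzw] at hx
          exact Or.inl ⟨hx, fun h => hzu (uniq hd (h ▸ hx) ha), fun h => hzv (uniq hd (h ▸ hx) hb)⟩
  have haX'w : a ∈ X' w := by rw [hX'w]; exact Or.inr (Or.inl rfl)
  have hbX'w : b ∈ X' w := by rw [hX'w]; exact Or.inr (Or.inr rfl)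
  have hu₀X'u : u₀ ∈ X' u := by rw [hX'u]; exact ⟨hu₀Xu, hu₀a⟩
  have hv₀X'v : v₀ ∈ X' v := by rw [hX'v]; exact ⟨hv₀Xv, hv₀b⟩
  have hstay : ∀ z x, x ∈ X z → x ≠ a → x ≠ b → x ∈ X' z := by
    intro z x hx hxa hxb
    by_cases hzw : z = w
    · rw [hzw, hX'w]; rw [hzw] at hx; exact Or.inl hx
    · by_cases hzv : z = v
      · rw [hzv, hX'v]; rw [hzv] at hx; exact ⟨hx, hxb⟩
      · by_cases hzu : z = u
        · rw [hzu, hX'u]; rw [hzu] at hx; exact ⟨hx, hxa⟩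
        · rw [hX'z z hzu hzv hzw]; exact hx
  -- X' is a minor model
  have hd' : Pairwise (fun p q => Disjoint (X' p) (X' q)) := by
    intro p q hpq
    rw [Set.disjoint_left]
    intro x hxp hxq
    rcases hmemX' p x hxp with ⟨h1, hxa, hxb⟩ | ⟨hx1, h2⟩
    · rcases hmemX' q x hxq with ⟨g1, -, -⟩ | ⟨gx1, -⟩
      · exact hpq (uniq hd h1 g1)
      · exact gx1.elim hxa hxb
    · rcases hmemX' q x hxq with ⟨-, gxa, gxb⟩ | ⟨-, g2⟩
      · exact hx1.elim gxa gxb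
      · exact hpq (h2.trans g2.symm)
  have hconn' : ∀ z, (G.induce (X' z)).Connected := by
    intro z
    by_cases hzw : z = w
    · rw [hzw, hX'w]
      have h1 : (G.induce (insert a (X w))).Connected := connected_insert_s5 (hconn w) hcXw hac
      have h2 : (G.induce (insert b (insert a (X w)))).Connected :=
        connected_insert_s5 h1 (Set.mem_insert_of_mem _ hcXw) hbc
      have hseteq : X w ∪ {a, b} = insert b (insert a (X w)) := by
        ext t
        simp only [Set.mem_union, Set.mem_insert_iff, Set.mem_singleton_iff]
        tauto
      rw [hseteq]
      exact h2
    · by_cases hzv : z = v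
      · rw [hzv, hX'v]
        exact connected_del (hconn v) hb ⟨v₀, hv₀Xv, hv₀b⟩ honev
      · by_cases hzu : z = u
        · rw [hzu, hX'u]
          exact connected_del (hconn u) ha ⟨u₀, hu₀Xu, hu₀a⟩ honeu
        · rw [hX'z z hzu hzv hzw]; exact hconn z
  have hedge' : ∀ p q, (grid k).Adj p q → ∃ α ∈ X' p, ∃ β ∈ X' q, G.Adj α β := by
    intro p q hpq
    obtain ⟨α, hα, β, hβ, hαβ⟩ := hedge p q hpq
    by_cases hαa : α = a
    · have hpu : p = u := uniq hd (hαa ▸ hα) ha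
      rcases (henuma β).mp (hαa ▸ hαβ) with h|h|h
      · have hqu : q = u := uniq hd (h ▸ hβ) hu₀Xu
        exact absurd hpq (by rw [hpu, hqu]; exact (grid k).loopless.irrefl u)
      · have hqv : q = v := uniq hd (h ▸ hβ) hb
        exact absurd hpq (by rw [hpu, hqv]; exact hnadj)
      · have hqw : q = w := uniq hd (h ▸ hβ) hcXw
        rw [hpu, hqw]
        exact ⟨u₀, hu₀X'u, a, haX'w, hau₀.symm⟩
    · by_cases hαb : α = b
      · have hpv : p = v := uniq hd (hαb ▸ hα) hb
        rcases (henumb β).mp (hαb ▸ hαβ) with h|h|h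
        · have hqu : q = u := uniq hd (h ▸ hβ) ha
          exact absurd hpq (by rw [hpv, hqu]; exact hnadj')
        · have hqw : q = w := uniq hd (h ▸ hβ) hcXw
          rw [hpv, hqw]
          exact ⟨v₀, hv₀X'v, b, hbX'w, hbv₀.symm⟩
        · have hqv : q = v := uniq hd (h ▸ hβ) hv₀Xv
          exact absurd hpq (by rw [hpv, hqv]; exact (grid k).loopless.irrefl v)
      · by_cases hβa : β = a
        · have hqu : q = u := uniq hd (hβa ▸ hβ) ha
          rcases (henuma α).mp ((hβa ▸ hαβ).symm) with h|h|h
          · have hpu : p = u := uniq hd (h ▸ hα) hu₀Xu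
            exact absurd hpq (by rw [hpu, hqu]; exact (grid k).loopless.irrefl u)
          · exact absurd h hαb
          · have hpw : p = w := uniq hd (h ▸ hα) hcXw
            rw [hpw, hqu]
            exact ⟨a, haX'w, u₀, hu₀X'u, hau₀⟩
        · by_cases hβb : β = b
          · have hqv : q = v := uniq hd (hβb ▸ hβ) hb
            rcases (henumb α).mp ((hβb ▸ hαβ).symm) with h|h|h
            · exact absurd h hαa
            · have hpw : p = w := uniq hd (h ▸ hα) hcXw
              rw [hpw, hqv]
              exact ⟨b, hbX'w, v₀, hv₀X'v, hbv₀⟩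
            · have hpv : p = v := uniq hd (h ▸ hα) hv₀Xv
              exact absurd hpq (by rw [hpv, hqv]; exact (grid k).loopless.irrefl v)
          · exact ⟨α, hstay p α hα hαa hαb, β, hstay q β hβ hβa hβb, hαβ⟩
  -- total size does not increase
  have htot : total k X' ≤ total k X := by
    have hvmem : v ∈ Finset.univ \ ({w} : Finset _) := by
      simp [Finset.mem_sdiff, hwv.symm]
    have humem : u ∈ (Finset.univ \ ({w} : Finset _)) \ ({v} : Finset _) := by
      simp [Finset.mem_sdiff, hwu.symm, huv]
    have e1 : total k X' = (X' w).ncard + ((X' v).ncard + ((X' u).ncard +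
        ∑ z ∈ ((Finset.univ \ {w}) \ {v}) \ {u}, (X' z).ncard)) := by
      rw [total, Finset.sum_eq_add_sum_sdiff_singleton_of_mem (Finset.mem_univ w),
        Finset.sum_eq_add_sum_sdiff_singleton_of_mem hvmem,
        Finset.sum_eq_add_sum_sdiff_singleton_of_mem humem]
    have e2 : total k X = (X w).ncard + ((X v).ncard + ((X u).ncard +
        ∑ z ∈ ((Finset.univ \ {w}) \ {v}) \ {u}, (X z).ncard)) := by
      rw [total, Finset.sum_eq_add_sum_sdiff_singleton_of_mem (Finset.mem_univ w),
        Finset.sum_eq_add_sum_sdiff_singleton_of_mem hvmem,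
        Finset.sum_eq_add_sum_sdiff_singleton_of_mem humem]
    have hrest : ∑ z ∈ ((Finset.univ \ {w}) \ {v}) \ {u}, (X' z).ncard =
        ∑ z ∈ ((Finset.univ \ {w}) \ {v}) \ {u}, (X z).ncard := by
      refine Finset.sum_congr rfl fun z hz => ?_
      simp only [Finset.mem_sdiff, Finset.mem_singleton] at hz
      rw [hX'z z hz.2 hz.1.2 hz.1.1.2]
    have c1 : (X' w).ncard ≤ (X w).ncard + 2 := by
      rw [hX'w]
      refine le_trans (Set.ncard_union_le _ _) ?_
      have : ({a, b} : Set V).ncard ≤ 2 := by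
        refine le_trans (Set.ncard_insert_le _ _) ?_
        simp [Set.ncard_singleton]
      omega
    have c2 : (X' v).ncard = (X v).ncard - 1 := by
      rw [hX'v, Set.ncard_diff_singleton_of_mem hb]
    have c3 : (X' u).ncard = (X u).ncard - 1 := by
      rw [hX'u, Set.ncard_diff_singleton_of_mem ha]
    have c4 : 2 ≤ (X v).ncard := ncard_ge_two hv₀Xv hb hv₀b (Set.toFinite _)
    have c5 : 2 ≤ (X u).ncard := ncard_ge_two hu₀Xu ha hu₀a (Set.toFinite _)
    rw [e1, e2, hrest]
    omega
  refine ⟨X', ⟨⟨hd', hconn', hedge'⟩, fun X'' h'' => le_trans htot (hle X'' h'')⟩, ?_⟩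
  rw [Set.ssubset_def]
  constructor
  · rintro ⟨x, y⟩ ⟨hxy0, z, z', hzz', hznadj, hzi, hz'i, hxz0, hyz0⟩
    have hxy : G.Adj x y := hxy0
    have hxz : x ∈ X' z := hxz0
    have hyz' : y ∈ X' z' := hyz0
    clear hxy0 hxz0 hyz0
    rcases hmemX' z x hxz with ⟨hxX, hxa, hxb⟩ | ⟨hxab, hzw⟩
    · rcases hmemX' z' y hyz' with ⟨hyX, hya, hyb⟩ | ⟨hyab, hz'w⟩
      · exact ⟨hxy, z, z', hzz', hznadj, hzi, hz'i, hxX, hyX⟩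
      · exfalso
        rcases hyab with rfl | rfl
        · rcases (henuma x).mp hxy.symm with h|h|h
          · have hzu : z = u := uniq hd (h ▸ hxX) hu₀Xu
            exact hznadj (by rw [hzu, hz'w]; exact hadjuw)
          · exact hxb h
          · exact hzz' ((uniq hd (h ▸ hxX) hcXw).trans hz'w.symm)
        · rcases (henumb x).mp hxy.symm with h|h|h
          · exact hxa h
          · exact hzz' ((uniq hd (h ▸ hxX) hcXw).trans hz'w.symm)
          · have hzv : z = v := uniq hd (h ▸ hxX) hv₀Xv
            exact hznadj (by rw [hzv, hz'w]; exact hadjvw)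
    · exfalso
      rcases hxab with rfl | rfl
      · rcases (henuma y).mp hxy with h|h|h
        · rcases hmemX' z' y hyz' with ⟨hyX, -, -⟩ | ⟨hyab, -⟩
          · have hz'u : z' = u := uniq hd (h ▸ hyX) hu₀Xu
            exact hznadj (by rw [hzw, hz'u]; exact hadjuw.symm)
          · rcases hyab with h2 | h2
            · exact hu₀a (h ▸ h2)
            · exact hu₀b (h ▸ h2)
        · rcases hmemX' z' y hyz' with ⟨-, -, hyb⟩ | ⟨-, hz'w⟩
          · exact hyb h
          · exact hzz' (hzw.trans hz'w.symm)
        · rcases hmemX' z' y hyz' with ⟨hyX, -, -⟩ | ⟨hyab, -⟩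
          · exact hzz' (hzw.trans (uniq hd (h ▸ hyX) hcXw).symm)
          · rcases hyab with h2 | h2
            · exact hca (h ▸ h2)
            · exact hcb (h ▸ h2)
      · rcases (henumb y).mp hxy with h|h|h
        · rcases hmemX' z' y hyz' with ⟨-, hya, -⟩ | ⟨-, hz'w⟩
          · exact hya h
          · exact hzz' (hzw.trans hz'w.symm)
        · rcases hmemX' z' y hyz' with ⟨hyX, -, -⟩ | ⟨hyab, -⟩
          · exact hzz' (hzw.trans (uniq hd (h ▸ hyX) hcXw).symm)
          · rcases hyab with h2 | h2
            · exact hca (h ▸ h2)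
            · exact hcb (h ▸ h2)
        · rcases hmemX' z' y hyz' with ⟨hyX, -, -⟩ | ⟨hyab, -⟩
          · have hz'v : z' = v := uniq hd (h ▸ hyX) hv₀Xv
            exact hznadj (by rw [hzw, hz'v]; exact hadjvw.symm)
          · rcases hyab with h2 | h2
            · exact hv₀a (h ▸ h2)
            · exact hv₀b (h ▸ h2)
  · intro hcontra
    have habmem : (a, b) ∈ InnerBad G k X := ⟨hadj, u, v, huv, hnadj, hu, hv, ha, hb⟩
    obtain ⟨-, z, z', hzz', -, -, -, haz0, hbz0⟩ := hcontra habmem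
    have haz : a ∈ X' z := haz0
    have hbz' : b ∈ X' z' := hbz0
    rcases hmemX' z a haz with ⟨-, hne, -⟩ | ⟨-, hzw⟩
    · exact hne rfl
    · rcases hmemX' z' b hbz' with ⟨-, -, hne⟩ | ⟨-, hz'w⟩
      · exact hne rfl
      · exact hzz' (hzw.trans hz'w.symm)


lemma construct (hk : 3 ≤ k) {X : Fin k × Fin k → Set V}
    (hX : IsMinorModel G (grid k) X) (hempty : InnerBad G k X = ∅) :
    ContainsInducedMinor G (grid (k - 2)) := by
  obtain ⟨hd, hconn, hedge⟩ := hX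
  refine ⟨fun p => X (emb k hk p), ⟨⟨?_, ?_, ?_⟩, ?_⟩⟩
  · intro p q hpq
    exact hd fun h => hpq (emb_inj hk h)
  · intro p; exact hconn _
  · intro p q hpq
    exact hedge _ _ ((emb_adj hk p q).mp hpq)
  · intro p q hne hnadj x hx y hy hxy
    have hmem : (x, y) ∈ InnerBad G k X :=
      ⟨hxy, emb k hk p, emb k hk q, fun h => hne (emb_inj hk h),
        fun h => hnadj ((emb_adj hk p q).mpr h), emb_inner hk p, emb_inner hk q, hx, hy⟩
    exact Set.notMem_empty _ (hempty ▸ hmem)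

theorem main_result (hk : 3 ≤ k) (hG : Sparsifiable G)
    (hminor : ContainsMinor G (grid k)) : ContainsInducedMinor G (grid (k - 2)) := by
  obtain ⟨X, hmin⟩ := exists_minimal hminor
  have haux : ∀ n, ∀ X : Fin k × Fin k → Set V, Minimal' G k X →
      (InnerBad G k X).ncard ≤ n → ContainsInducedMinor G (grid (k - 2)) := by
    intro n
    induction n with
    | zero =>
      intro X hmin h0
      have hemp : InnerBad G k X = ∅ :=
        (Set.ncard_eq_zero (Set.toFinite _)).mp (by omega)
      exact construct hk hmin.1 hemp
    | succ n ih =>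
      intro X hmin hle'
      by_cases hemp : InnerBad G k X = ∅
      · exact construct hk hmin.1 hemp
      · obtain ⟨⟨a, b⟩, hab⟩ := Set.nonempty_iff_ne_empty.mpr hemp
        obtain ⟨X', hmin', hss⟩ := step hk hG hmin hab
        have hlt : (InnerBad G k X').ncard < (InnerBad G k X).ncard :=
          Set.ncard_lt_ncard hss (Set.toFinite _)
        exact ih X' hmin' (by omega)
  exact haux _ X hmin le_rfl

end Main

theorem grid_inducedMinor_of_grid_minor_of_sparsifiable (k : ℕ) (hk : 3 ≤ k)
    {V : Type} [Fintype V] (G : SimpleGraph V)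
    (hG : Sparsifiable G) (hminor : ContainsMinor G (grid k)) :
    ContainsInducedMinor G (grid (k - 2)) := main_result hk hG hminor

end Paper
end
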